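/- Let p > q > 0. Then the image of the centered ellipse {z ∈ ℂ : (Re z)²/p + (Im z)²/q = 1} under the complex square map z ↦ z² equals the focused conic {w ∈ ℂ : |w| + |w − (p − q)| = p + q}, an ellipse with one focus at the origin and second focus at the real point p − q. (The complex square map sends the centered Hooke ellipse with semi-axes √p, √q onto the Kepler ellipse with a focus at the Hooke/Kepler center; in particular the centered Hooke boundary B_H corresponds to the focused Kepler boundary B_K.) -/

import Mathlib

/-- **The complex square map sends centered Hooke ellipses to focused Kepler ellipses.**
For `p > q > 0`, the image of the centered ellipse `(Re z)²/p + (Im z)²/q = 1` under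
`z ↦ z²` equals the focused conic `{w : |w| + |w − (p−q)| = p + q}`, an ellipse with one
focus at the origin and second focus at the real point `p − q`. -/
theorem hooke_boundary_to_kepler_boundary
    (p q : ℝ) (hq : 0 < q) (hpq : q < p) :
    (fun z : ℂ => z ^ 2) '' {z : ℂ | z.re ^ 2 / p + z.im ^ 2 / q = 1}
      = {w : ℂ | ‖w‖ + ‖w - ((p : ℂ) - (q : ℂ))‖ = p + q} := by
  have hp : 0 < p := hq.trans hpq
  ext w
  simp only [Set.mem_image, Set.mem_setOf_eq]
  constructor
  · rintro ⟨z, hz, rfl⟩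
    set x := z.re with hx
    set y := z.im with hy
    have hxy : q * x ^ 2 + p * y ^ 2 = p * q := by
      field_simp at hz; linarith
    have h1 : ‖z ^ 2‖ = x ^ 2 + y ^ 2 := by
      rw [norm_pow, Complex.sq_norm, Complex.normSq_apply, hx, hy]; ring
    have hre : (z ^ 2 - ((p : ℂ) - q)).re = x ^ 2 - y ^ 2 - (p - q) := by
      simp [pow_two, Complex.mul_re, hx, hy]
    have him : (z ^ 2 - ((p : ℂ) - q)).im = 2 * x * y := by
      simp [pow_two, Complex.mul_im, hx, hy]; ring
    have hs : x ^ 2 + y ^ 2 ≤ p + q := by nlinarith [sq_nonneg x, sq_nonneg y]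
    have h2 : ‖z ^ 2 - ((p : ℂ) - q)‖ = p + q - (x ^ 2 + y ^ 2) := by
      rw [Complex.norm_def, Complex.normSq_apply, hre, him]
      rw [show (x ^ 2 - y ^ 2 - (p - q)) * (x ^ 2 - y ^ 2 - (p - q)) +
          (2 * x * y) * (2 * x * y) = (p + q - (x ^ 2 + y ^ 2)) ^ 2 from by nlinarith]
      exact Real.sqrt_sq (by linarith)
    rw [h1, h2]; ring
  · intro hw
    set R := ‖w‖ with hR
    have hR0 : 0 ≤ R := norm_nonneg w
    have hreR' := abs_le.mp (Complex.abs_re_le_norm w)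
    have hRsq : R ^ 2 = w.re ^ 2 + w.im ^ 2 := by
      rw [hR, Complex.sq_norm, Complex.normSq_apply]; ring
    have hsubnn : 0 ≤ ‖w - ((p : ℂ) - q)‖ := norm_nonneg _
    have hsub : ‖w - ((p : ℂ) - q)‖ = p + q - R := by linarith
    have hsubsq : (p + q - R) ^ 2 = (w.re - (p - q)) ^ 2 + w.im ^ 2 := by
      rw [← hsub, Complex.sq_norm, Complex.normSq_apply]
      simp [Complex.sub_re, Complex.sub_im]
      ring
    have hkey : (p + q) * R = (p - q) * w.re + 2 * p * q := by nlinarith [hRsq]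
    have ha : 0 ≤ (R + w.re) / 2 := by linarith
    have hb : 0 ≤ (R - w.re) / 2 := by linarith
    set u := Real.sqrt ((R + w.re) / 2) with hu
    set v := (if 0 ≤ w.im then Real.sqrt ((R - w.re) / 2)
      else -Real.sqrt ((R - w.re) / 2)) with hv
    have hu2 : u ^ 2 = (R + w.re) / 2 := Real.sq_sqrt ha
    have hv2 : v ^ 2 = (R - w.re) / 2 := by
      rw [hv]; split
      · exact Real.sq_sqrt hb
      · rw [neg_sq]; exact Real.sq_sqrt hb
    have hab : Real.sqrt ((R + w.re) / 2) * Real.sqrt ((R - w.re) / 2) = |w.im| / 2 := by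
      rw [← Real.sqrt_mul ha]
      have h4 : (R + w.re) / 2 * ((R - w.re) / 2) = (w.im / 2) ^ 2 := by nlinarith [hRsq]
      rw [h4, Real.sqrt_sq_eq_abs, abs_div]
      simp
    have huv : u * v = w.im / 2 := by
      rw [hu, hv]; split
      · next h => rw [hab, abs_of_nonneg h]
      · next h => rw [mul_neg, hab, abs_of_neg (lt_of_not_ge h)]; ring
    refine ⟨(u : ℂ) + (v : ℂ) * Complex.I, ?_, ?_⟩
    · have hre : ((u : ℂ) + (v : ℂ) * Complex.I).re = u := by simp
      have him : ((u : ℂ) + (v : ℂ) * Complex.I).im = v := by simp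
      simp only [Set.mem_setOf_eq, hre, him, hu2, hv2]
      field_simp
      linarith
    · show ((u : ℂ) + (v : ℂ) * Complex.I) ^ 2 = w
      apply Complex.ext
      · have : (((u : ℂ) + (v : ℂ) * Complex.I) ^ 2).re = u ^ 2 - v ^ 2 := by
          simp [pow_two, Complex.mul_re]
        rw [this, hu2, hv2]; ring
      · have : (((u : ℂ) + (v : ℂ) * Complex.I) ^ 2).im = 2 * (u * v) := by
          simp [pow_two, Complex.mul_im]; ring
        rw [this, huv]; ring
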